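/- arXiv:2002.11758 — 4 statements merged into one kernel-verified Lean document; each statement's English description precedes it below -/
import Mathlib

section
/- For any τ, B > 0 there is a constant C depending only on τ and B such that for all positive integers Q, N and all D > 0, the number of integers 1 ≤ k ≤ N whose count of positive divisors smaller than Q exceeds D is at most C · D^{-B} · Q^{τ} · N. -/
open Finset


/-- Divisor bound: for every `δ > 0` there is `C ≥ 1` with `d(n) ≤ C * n^δ`. -/
lemma my_divisor_bound (δ : ℝ) (hδ : 0 < δ) :
    ∃ C : ℝ, 1 ≤ C ∧ ∀ n : ℕ, n ≠ 0 → ((n.divisors.card : ℝ)) ≤ C * (n : ℝ) ^ δ := by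
  set K : ℝ := 1 + 1 / (δ * Real.log 2) with hK
  have hlog2 : 0 < Real.log 2 := Real.log_pos one_lt_two
  have hδl : 0 < δ * Real.log 2 := mul_pos hδ hlog2
  have hK1 : 1 ≤ K := le_add_of_nonneg_right (by positivity)
  set P : ℕ := ⌈(2 : ℝ) ^ (1/δ)⌉₊ + 1 with hP
  refine ⟨K ^ P, one_le_pow₀ hK1, fun n hn => ?_⟩
  -- per prime factor bound
  have key : ∀ p ∈ n.primeFactors, ((n.factorization p + 1 : ℕ) : ℝ) ≤
      (if (p : ℝ) ^ δ < 2 then K else 1) * ((p ^ n.factorization p : ℕ) : ℝ) ^ δ := by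
    intro p hp
    have hp2 : 2 ≤ p := (Nat.prime_of_mem_primeFactors hp).two_le
    set a : ℕ := n.factorization p with ha
    have hpR : (2 : ℝ) ≤ (p : ℝ) := by exact_mod_cast hp2
    have hppos : (0 : ℝ) < p := by positivity
    have hcast : ((p ^ a : ℕ) : ℝ) ^ δ = (p : ℝ) ^ ((a : ℝ) * δ) := by
      push_cast
      rw [← Real.rpow_natCast (p : ℝ) a, ← Real.rpow_mul hppos.le]
    rw [hcast]
    have hbase : (2 : ℝ) ^ ((a : ℝ) * δ) ≤ (p : ℝ) ^ ((a : ℝ) * δ) :=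
      Real.rpow_le_rpow (by norm_num) hpR (by positivity)
    by_cases h2 : (p : ℝ) ^ δ < 2
    · simp only [h2, if_true]
      -- K * p^(aδ) ≥ K * (1 + aδ log 2) ≥ a+1
      have hexp : 1 + (a : ℝ) * δ * Real.log 2 ≤ (2 : ℝ) ^ ((a : ℝ) * δ) := by
        have := Real.add_one_le_exp ((a : ℝ) * δ * Real.log 2)
        rw [Real.rpow_def_of_pos (by norm_num : (0:ℝ) < 2)]
        calc 1 + (a : ℝ) * δ * Real.log 2 = (a : ℝ) * δ * Real.log 2 + 1 := by ring
        _ ≤ Real.exp ((a : ℝ) * δ * Real.log 2) := this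
        _ = Real.exp ((a : ℝ) * δ * Real.log 2) := rfl
        _ = Real.exp (Real.log 2 * ((a : ℝ) * δ)) := by ring_nf
      have h1 : ((a + 1 : ℕ) : ℝ) ≤ K * (1 + (a : ℝ) * δ * Real.log 2) := by
        push_cast
        have expand : K * (1 + (a : ℝ) * δ * Real.log 2)
            = 1 + (a : ℝ) * δ * Real.log 2 + 1 / (δ * Real.log 2) + (a : ℝ) := by
          rw [hK]
          field_simp
          ring
        rw [expand]
        have : (0:ℝ) ≤ (a : ℝ) * δ * Real.log 2 := by positivity
        have : (0:ℝ) ≤ 1 / (δ * Real.log 2) := by positivity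
        nlinarith
      calc ((a + 1 : ℕ) : ℝ) ≤ K * (1 + (a : ℝ) * δ * Real.log 2) := h1
      _ ≤ K * (2 : ℝ) ^ ((a : ℝ) * δ) := by
          exact mul_le_mul_of_nonneg_left hexp (le_trans zero_le_one hK1)
      _ ≤ K * (p : ℝ) ^ ((a : ℝ) * δ) := mul_le_mul_of_nonneg_left hbase (le_trans zero_le_one hK1)
    · simp only [h2, if_false, one_mul]
      push_neg at h2
      -- a+1 ≤ 2^a ≤ (p^δ)^a = p^(aδ)
      have h2a : ((a + 1 : ℕ) : ℝ) ≤ (2 : ℝ) ^ (a : ℕ) := by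
        exact_mod_cast Nat.succ_le_of_lt (Nat.lt_two_pow_self (n := a))
      calc ((a + 1 : ℕ) : ℝ) ≤ (2 : ℝ) ^ (a : ℕ) := h2a
      _ ≤ ((p : ℝ) ^ δ) ^ (a : ℕ) := pow_le_pow_left₀ (by norm_num) h2 a
      _ = (p : ℝ) ^ ((a : ℝ) * δ) := by
          rw [← Real.rpow_natCast ((p : ℝ) ^ δ) a, ← Real.rpow_mul hppos.le]
          ring_nf
  -- now assemble
  have hd : ((n.divisors.card : ℕ) : ℝ) = ∏ p ∈ n.primeFactors, ((n.factorization p + 1 : ℕ) : ℝ) := by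
    rw [Nat.card_divisors hn]
    push_cast
    rfl
  have hnval : ((n : ℝ)) ^ δ = ∏ p ∈ n.primeFactors, ((p ^ n.factorization p : ℕ) : ℝ) ^ δ := by
    conv_lhs => rw [← Nat.factorization_prod_pow_eq_self hn]
    rw [Nat.prod_factorization_eq_prod_primeFactors]
    push_cast
    rw [← Real.finset_prod_rpow _ _ (fun i _ => by positivity) δ]
  rw [hd, hnval]
  calc ∏ p ∈ n.primeFactors, ((n.factorization p + 1 : ℕ) : ℝ)
      ≤ ∏ p ∈ n.primeFactors,
        ((if (p : ℝ) ^ δ < 2 then K else 1) * ((p ^ n.factorization p : ℕ) : ℝ) ^ δ) :=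
        Finset.prod_le_prod (fun p _ => by positivity) key
    _ = (∏ p ∈ n.primeFactors, (if (p : ℝ) ^ δ < 2 then K else 1))
        * ∏ p ∈ n.primeFactors, ((p ^ n.factorization p : ℕ) : ℝ) ^ δ := by
        rw [Finset.prod_mul_distrib]
    _ ≤ K ^ P * ∏ p ∈ n.primeFactors, ((p ^ n.factorization p : ℕ) : ℝ) ^ δ := by
        refine mul_le_mul_of_nonneg_right ?_ (Finset.prod_nonneg fun p _ => by positivity)
        rw [Finset.prod_ite, Finset.prod_const, Finset.prod_const, one_pow, mul_one]
        have hsub : (n.primeFactors.filter fun p : ℕ => (p : ℝ) ^ δ < 2) ⊆ Finset.range P := by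
          intro p hp
          rw [Finset.mem_filter] at hp
          rw [Finset.mem_range]
          have hlt : (p : ℝ) < (2 : ℝ) ^ (1/δ) := by
            by_contra hc
            push_neg at hc
            have : (2 : ℝ) ≤ (p : ℝ) ^ δ := by
              calc (2:ℝ) = ((2:ℝ) ^ (1/δ)) ^ δ := by
                    rw [← Real.rpow_mul (by norm_num : (0:ℝ) ≤ 2),
                      one_div_mul_cancel (ne_of_gt hδ), Real.rpow_one]
              _ ≤ (p : ℝ) ^ δ := Real.rpow_le_rpow (by positivity) hc hδ.le
            exact absurd hp.2 (not_lt.mpr this)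
          calc p < ⌈(2 : ℝ) ^ (1/δ)⌉₊ := Nat.lt_ceil.mpr hlt
          _ < P := Nat.lt_succ_self _
        calc K ^ (n.primeFactors.filter fun p : ℕ => (p : ℝ) ^ δ < 2).card
            ≤ K ^ (Finset.range P).card := pow_le_pow_right₀ hK1 (Finset.card_le_card hsub)
          _ = K ^ P := by rw [Finset.card_range]


lemma my_moment_swap (m Q N : ℕ) (hQ : 0 < Q) :
    ∑ k ∈ Icc 1 N, (((k.divisors.filter fun q => q ≤ Q).card : ℝ)) ^ m
      ≤ ∑ l ∈ Icc 1 (Q ^ m), ((l.divisors.card : ℝ)) ^ m * ((N : ℝ) / l) := by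
  classical
  set T : Finset (Fin m → ℕ) := Fintype.piFinset (fun _ : Fin m => Icc 1 Q) with hT
  set L : (Fin m → ℕ) → ℕ := fun t => Finset.univ.lcm t with hL
  -- Step 1: rewrite each term as a count of tuples
  have step1 : ∀ k ∈ Icc 1 N,
      ((k.divisors.filter fun q => q ≤ Q).card) ^ m
        = (T.filter fun t => ∀ i, t i ∣ k).card := by
    intro k hk
    rw [mem_Icc] at hk
    have hk0 : k ≠ 0 := by omega
    rw [← Fintype.card_piFinset_const]
    congr 1
    ext t
    simp only [Fintype.mem_piFinset, Finset.mem_filter, Nat.mem_divisors, mem_Icc, hT]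
    constructor
    · intro h
      exact ⟨fun i => ⟨Nat.pos_of_dvd_of_pos (h i).1.1 (by omega), (h i).2⟩, fun i => (h i).1.1⟩
    · intro h i
      exact ⟨⟨h.2 i, hk0⟩, (h.1 i).2⟩
  -- Step 2: swap the two sums
  have step2 : ∑ k ∈ Icc 1 N, ((T.filter fun t => ∀ i, t i ∣ k).card)
      = ∑ t ∈ T, ((Icc 1 N).filter fun k => ∀ i, t i ∣ k).card := by
    simp_rw [Finset.card_filter]
    exact Finset.sum_comm
  -- Step 3: count multiples
  have step3 : ∀ t ∈ T, (((Icc 1 N).filter fun k => ∀ i, t i ∣ k).card) = N / L t := by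
    intro t _
    have : ((Icc 1 N).filter fun k => ∀ i, t i ∣ k)
        = ((Ioc 0 N).filter fun k => L t ∣ k) := by
      rw [← Finset.Icc_add_one_left_eq_Ioc]
      refine Finset.filter_congr fun k _ => ?_
      simp only [hL, Finset.lcm_dvd_iff, Finset.mem_univ, forall_true_left, eq_iff_iff]
    rw [this, Nat.Ioc_filter_dvd_card_eq_div]
  -- facts about L t for t ∈ T
  have hLmem : ∀ t ∈ T, L t ∈ Icc 1 (Q ^ m) := by
    intro t ht
    simp only [hT, Fintype.mem_piFinset, mem_Icc] at ht
    have hdvd : L t ∣ ∏ i, t i := Finset.lcm_dvd fun i _ => Finset.dvd_prod_of_mem t (mem_univ i)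
    have hprodpos : 0 < ∏ i, t i := Finset.prod_pos fun i _ => (ht i).1
    have hprodle : (∏ i, t i) ≤ Q ^ m := by
      calc (∏ i, t i) ≤ Q ^ (Finset.univ : Finset (Fin m)).card :=
            Finset.prod_le_pow_card _ _ _ fun i _ => (ht i).2
      _ = Q ^ m := by rw [Finset.card_univ, Fintype.card_fin]
    rw [mem_Icc]
    exact ⟨Nat.pos_of_dvd_of_pos hdvd hprodpos, le_trans (Nat.le_of_dvd hprodpos hdvd) hprodle⟩
  -- Step 4: fiber bound
  have step4 : ∀ l ∈ T.image L, (T.filter fun t => L t = l).card ≤ (l.divisors.card) ^ m := by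
    intro l hl
    obtain ⟨t₀, ht₀, rfl⟩ := Finset.mem_image.mp hl
    have hl1 : 1 ≤ L t₀ := (mem_Icc.mp (hLmem t₀ ht₀)).1
    have hsub : (T.filter fun t => L t = L t₀)
        ⊆ Fintype.piFinset (fun _ : Fin m => (L t₀).divisors) := by
      intro t ht
      rw [Finset.mem_filter] at ht
      rw [Fintype.mem_piFinset]
      intro i
      rw [Nat.mem_divisors]
      have hdvd : t i ∣ L t := Finset.dvd_lcm (mem_univ i)
      rw [ht.2] at hdvd
      exact ⟨hdvd, Nat.one_le_iff_ne_zero.mp hl1⟩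
    calc (T.filter fun t => L t = L t₀).card
        ≤ (Fintype.piFinset (fun _ : Fin m => (L t₀).divisors)).card := Finset.card_le_card hsub
      _ = ((L t₀).divisors.card) ^ m := Fintype.card_piFinset_const _ m
  -- Assemble
  have natstep : ∑ k ∈ Icc 1 N, ((k.divisors.filter fun q => q ≤ Q).card) ^ m
      = ∑ t ∈ T, N / L t := by
    rw [Finset.sum_congr rfl step1, step2]
    exact Finset.sum_congr rfl step3
  calc ∑ k ∈ Icc 1 N, (((k.divisors.filter fun q => q ≤ Q).card : ℝ)) ^ m
      = ((∑ k ∈ Icc 1 N, ((k.divisors.filter fun q => q ≤ Q).card) ^ m : ℕ) : ℝ) := by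
        push_cast
        rfl
    _ = ∑ t ∈ T, ((N / L t : ℕ) : ℝ) := by rw [natstep]; push_cast; rfl
    _ ≤ ∑ t ∈ T, (N : ℝ) / (L t : ℝ) := Finset.sum_le_sum fun t _ => Nat.cast_div_le
    _ = ∑ l ∈ T.image L, (T.filter fun t => L t = l).card • ((N : ℝ) / l) :=
        Finset.sum_comp (fun l : ℕ => (N : ℝ) / l) L
    _ ≤ ∑ l ∈ T.image L, ((l.divisors.card : ℝ)) ^ m * ((N : ℝ) / l) := by
        refine Finset.sum_le_sum fun l hl => ?_
        rw [nsmul_eq_mul]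
        have h1 : 1 ≤ l := by
          obtain ⟨t₀, ht₀, rfl⟩ := Finset.mem_image.mp hl
          exact (mem_Icc.mp (hLmem t₀ ht₀)).1
        refine mul_le_mul_of_nonneg_right ?_ (by positivity)
        exact_mod_cast step4 l hl
    _ ≤ ∑ l ∈ Icc 1 (Q ^ m), ((l.divisors.card : ℝ)) ^ m * ((N : ℝ) / l) := by
        refine Finset.sum_le_sum_of_subset_of_nonneg ?_ fun l hl _ => ?_
        · intro l hl
          obtain ⟨t₀, ht₀, rfl⟩ := Finset.mem_image.mp hl
          exact hLmem t₀ ht₀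
        · have h1 : 1 ≤ l := (mem_Icc.mp hl).1
          positivity


lemma my_sum_inv_le (X : ℕ) : ∑ l ∈ Icc 1 X, ((l : ℝ))⁻¹ ≤ 1 + Real.log X := by
  have h := harmonic_le_one_add_log X
  have he : ((harmonic X : ℚ) : ℝ) = ∑ l ∈ Icc 1 X, ((l : ℝ))⁻¹ := by
    rw [harmonic_eq_sum_Icc]
    push_cast
    rfl
  rwa [he] at h

lemma my_log_le (γ x : ℝ) (hγ : 0 < γ) (hx : 1 ≤ x) : Real.log x ≤ x ^ γ / γ := by
  have hx0 : 0 < x := lt_of_lt_of_le one_pos hx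
  have h1 : Real.log (x ^ γ) = γ * Real.log x := Real.log_rpow hx0 γ
  have h2 : Real.log (x ^ γ) ≤ x ^ γ - 1 := Real.log_le_sub_one_of_pos (Real.rpow_pos_of_pos hx0 γ)
  have h3 : γ * Real.log x ≤ x ^ γ := by
    rw [← h1]; linarith
  rw [div_eq_inv_mul, ← mul_le_mul_iff_right₀ hγ, ← mul_assoc, mul_inv_cancel₀ (ne_of_gt hγ), one_mul]
  exact h3

/-- For any τ, B > 0 there is a constant C = C(τ,B) such that for all positive
integers Q, N and all D > 0, the number of integers 1 ≤ k ≤ N whose number of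
positive divisors that are at most Q exceeds D is at most C · D^(−B) · Q^τ · N. -/
theorem divisor_level_set_bound (τ B : ℝ) (hτ : 0 < τ) (hB : 0 < B) :
    ∃ C : ℝ, 0 < C ∧ ∀ (Q N : ℕ), 0 < Q → 0 < N → ∀ D : ℝ, 0 < D →
      (((Finset.Icc 1 N).filter fun k =>
          D < (((Nat.divisors k).filter fun q => q ≤ Q).card : ℝ)).card : ℝ)
        ≤ C * D ^ (-B) * (Q : ℝ) ^ τ * (N : ℝ) := by
  classical
  set m : ℕ := max 1 ⌈B⌉₊ with hm
  have hm1 : 1 ≤ m := le_max_left _ _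
  have hmR : (0 : ℝ) < m := by exact_mod_cast lt_of_lt_of_le zero_lt_one hm1
  have hBm : B ≤ (m : ℝ) := le_trans (Nat.le_ceil B)
    (by exact_mod_cast le_max_right 1 ⌈B⌉₊)
  set δ : ℝ := τ / (2 * m * m) with hδdef
  set γ : ℝ := τ / (2 * m) with hγdef
  have hδ : 0 < δ := by positivity
  have hγ : 0 < γ := by positivity
  obtain ⟨CA, hCA1, hCA⟩ := my_divisor_bound δ hδ
  have hCA0 : 0 < CA := lt_of_lt_of_le zero_lt_one hCA1
  set C₁ : ℝ := CA ^ m * (1 + 1 / γ) with hC₁def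
  have hC₁ : 0 < C₁ := by positivity
  refine ⟨max C₁ 1, lt_of_lt_of_le zero_lt_one (le_max_right _ _), fun Q N hQ hN D hD => ?_⟩
  have hQ1R : (1 : ℝ) ≤ (Q : ℝ) := by exact_mod_cast hQ
  have hQτ : (1 : ℝ) ≤ (Q : ℝ) ^ τ := Real.one_le_rpow hQ1R hτ.le
  set F := (Finset.Icc 1 N).filter fun k =>
      D < (((Nat.divisors k).filter fun q => q ≤ Q).card : ℝ) with hF
  -- moment bound
  have hmoment : ∑ k ∈ Icc 1 N, (((k.divisors.filter fun q => q ≤ Q).card : ℝ)) ^ m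
      ≤ C₁ * (Q : ℝ) ^ τ * (N : ℝ) := by
    set X := Q ^ m with hX
    have hX1 : 1 ≤ X := Nat.one_le_pow _ _ hQ
    have hXR : (1 : ℝ) ≤ (X : ℝ) := by exact_mod_cast hX1
    have hXR0 : (0 : ℝ) < (X : ℝ) := lt_of_lt_of_le one_pos hXR
    have hXγ : (1 : ℝ) ≤ (X : ℝ) ^ γ := Real.one_le_rpow hXR hγ.le
    have term : ∀ l ∈ Icc 1 X, ((l.divisors.card : ℝ)) ^ m * ((N : ℝ) / l)
        ≤ CA ^ m * (X : ℝ) ^ (δ * m) * ((N : ℝ) * ((l : ℝ))⁻¹) := by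
      intro l hl
      rw [mem_Icc] at hl
      have hl0 : (0 : ℝ) < l := by exact_mod_cast lt_of_lt_of_le zero_lt_one hl.1
      have h1 : ((l.divisors.card : ℝ)) ^ m ≤ (CA * (l : ℝ) ^ δ) ^ m :=
        pow_le_pow_left₀ (by positivity) (hCA l (by omega)) m
      have h2 : (CA * (l : ℝ) ^ δ) ^ m = CA ^ m * ((l : ℝ) ^ δ) ^ m := mul_pow _ _ _
      have h3 : ((l : ℝ) ^ δ) ^ m = (l : ℝ) ^ (δ * m) := by
        rw [← Real.rpow_natCast ((l : ℝ) ^ δ) m, ← Real.rpow_mul hl0.le]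
      have h4 : (l : ℝ) ^ (δ * m) ≤ (X : ℝ) ^ (δ * m) := by
        apply Real.rpow_le_rpow hl0.le (by exact_mod_cast hl.2) (by positivity)
      have h5 : ((N : ℝ) / l) = (N : ℝ) * ((l : ℝ))⁻¹ := div_eq_mul_inv _ _
      rw [h5]
      calc ((l.divisors.card : ℝ)) ^ m * ((N : ℝ) * ((l : ℝ))⁻¹)
          ≤ (CA ^ m * (l : ℝ) ^ (δ * m)) * ((N : ℝ) * ((l : ℝ))⁻¹) := by
            refine mul_le_mul_of_nonneg_right ?_ (by positivity)
            rw [h2, h3] at h1; exact h1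
        _ ≤ (CA ^ m * (X : ℝ) ^ (δ * m)) * ((N : ℝ) * ((l : ℝ))⁻¹) := by
            refine mul_le_mul_of_nonneg_right ?_ (by positivity)
            exact mul_le_mul_of_nonneg_left h4 (by positivity)
    have hexp : (X : ℝ) ^ (δ * m) * (X : ℝ) ^ γ = (Q : ℝ) ^ τ := by
      rw [← Real.rpow_add hXR0]
      have hXQ : (X : ℝ) = (Q : ℝ) ^ (m : ℝ) := by
        rw [Real.rpow_natCast]; exact_mod_cast rfl
      rw [hXQ, ← Real.rpow_mul (by positivity)]
      congr 1
      have hmne : (m : ℝ) ≠ 0 := ne_of_gt hmR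
      rw [hδdef, hγdef]
      field_simp
      ring
    calc ∑ k ∈ Icc 1 N, (((k.divisors.filter fun q => q ≤ Q).card : ℝ)) ^ m
        ≤ ∑ l ∈ Icc 1 X, ((l.divisors.card : ℝ)) ^ m * ((N : ℝ) / l) :=
          my_moment_swap m Q N hQ
      _ ≤ ∑ l ∈ Icc 1 X, CA ^ m * (X : ℝ) ^ (δ * m) * ((N : ℝ) * ((l : ℝ))⁻¹) :=
          Finset.sum_le_sum term
      _ = CA ^ m * (X : ℝ) ^ (δ * m) * (N : ℝ) * ∑ l ∈ Icc 1 X, ((l : ℝ))⁻¹ := by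
          rw [Finset.mul_sum]
          exact Finset.sum_congr rfl fun l _ => by ring
      _ ≤ CA ^ m * (X : ℝ) ^ (δ * m) * (N : ℝ) * (1 + Real.log X) := by
          refine mul_le_mul_of_nonneg_left (my_sum_inv_le X) (by positivity)
      _ ≤ CA ^ m * (X : ℝ) ^ (δ * m) * (N : ℝ) * ((1 + 1/γ) * (X : ℝ) ^ γ) := by
          refine mul_le_mul_of_nonneg_left ?_ (by positivity)
          have hlog := my_log_le γ (X : ℝ) hγ hXR
          calc 1 + Real.log X ≤ 1 + (X : ℝ) ^ γ / γ := by linarith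
            _ ≤ (X : ℝ) ^ γ + (X : ℝ) ^ γ / γ := by linarith
            _ = (1 + 1/γ) * (X : ℝ) ^ γ := by ring
      _ = C₁ * ((X : ℝ) ^ (δ * m) * (X : ℝ) ^ γ) * (N : ℝ) := by rw [hC₁def]; ring
      _ = C₁ * (Q : ℝ) ^ τ * (N : ℝ) := by rw [hexp]
  by_cases hD1 : 1 ≤ D
  · -- Markov
    have hmark : (F.card : ℝ) * D ^ m
        ≤ ∑ k ∈ Icc 1 N, (((k.divisors.filter fun q => q ≤ Q).card : ℝ)) ^ m := by
      calc (F.card : ℝ) * D ^ m = ∑ _k ∈ F, D ^ m := by rw [Finset.sum_const, nsmul_eq_mul]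
        _ ≤ ∑ k ∈ F, (((k.divisors.filter fun q => q ≤ Q).card : ℝ)) ^ m := by
            refine Finset.sum_le_sum fun k hk => ?_
            exact pow_le_pow_left₀ hD.le (le_of_lt (Finset.mem_filter.mp hk).2) m
        _ ≤ ∑ k ∈ Icc 1 N, (((k.divisors.filter fun q => q ≤ Q).card : ℝ)) ^ m :=
            Finset.sum_le_sum_of_subset_of_nonneg (Finset.filter_subset _ _)
              fun k _ _ => by positivity
    have hDm : (0 : ℝ) < D ^ m := by positivity
    have step : (F.card : ℝ) ≤ C₁ * (Q : ℝ) ^ τ * (N : ℝ) * (D ^ m)⁻¹ := by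
      rw [← div_eq_mul_inv, le_div_iff₀ hDm]
      exact le_trans hmark hmoment
    have hinv : ((D : ℝ) ^ m)⁻¹ = D ^ (-(m : ℝ)) := by
      rw [Real.rpow_neg hD.le, Real.rpow_natCast]
    have hrpow : D ^ (-(m : ℝ)) ≤ D ^ (-B) :=
      Real.rpow_le_rpow_of_exponent_le hD1 (by linarith)
    calc (F.card : ℝ) ≤ C₁ * (Q : ℝ) ^ τ * (N : ℝ) * (D ^ m)⁻¹ := step
      _ = C₁ * D ^ (-(m : ℝ)) * (Q : ℝ) ^ τ * (N : ℝ) := by rw [hinv]; ring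
      _ ≤ C₁ * D ^ (-B) * (Q : ℝ) ^ τ * (N : ℝ) := by
          have h0 : (0 : ℝ) ≤ (Q : ℝ) ^ τ := by positivity
          gcongr
      _ ≤ max C₁ 1 * D ^ (-B) * (Q : ℝ) ^ τ * (N : ℝ) := by
          have h0 : (0 : ℝ) ≤ (Q : ℝ) ^ τ := by positivity
          have h3 : (0 : ℝ) ≤ D ^ (-B) := (Real.rpow_pos_of_pos hD (-B)).le
          gcongr
          exact le_max_left _ _
  · push_neg at hD1
    have hDB : (1 : ℝ) ≤ D ^ (-B) :=
      Real.one_le_rpow_of_pos_of_le_one_of_nonpos hD hD1.le (by linarith)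
    have hcard : (F.card : ℝ) ≤ (N : ℝ) := by
      have h1 : F.card ≤ (Icc 1 N).card := by
        rw [hF]; exact Finset.card_filter_le _ _
      have hIcc : (Icc 1 N).card = N := by rw [Nat.card_Icc]; omega
      rw [hIcc] at h1
      exact_mod_cast h1
    have hone : (1 : ℝ) ≤ max C₁ 1 * D ^ (-B) * (Q : ℝ) ^ τ := by
      have h2 : (1 : ℝ) ≤ max C₁ 1 := le_max_right _ _
      have h3 : (1 : ℝ) ≤ max C₁ 1 * D ^ (-B) := by nlinarith
      nlinarith
    calc (F.card : ℝ) ≤ (N : ℝ) := hcard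
      _ = 1 * (N : ℝ) := (one_mul _).symm
      _ ≤ max C₁ 1 * D ^ (-B) * (Q : ℝ) ^ τ * (N : ℝ) :=
          mul_le_mul_of_nonneg_right hone (by positivity)
end

section
/- Let f ∈ ℓ^p(ℤ^n) and h ∈ ℤ^n, and define f_h(x) = f(x) + f(x+h). Then lim_{‖h‖→∞} ‖f_h‖_{ℓ^p(ℤ^n)} = 2^{1/p} ‖f‖_{ℓ^p(ℤ^n)} for 1 ≤ p < ∞. -/
open MeasureTheory ENNReal Filter

private lemma tsum_translate {n : ℕ} (F : (Fin n → ℤ) → ℝ≥0∞) (h : Fin n → ℤ) :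
    ∑' x, F (x + h) = ∑' x, F x := by
  simpa using (Equiv.addRight h).tsum_eq F

private lemma elp_count {n : ℕ} (u : (Fin n → ℤ) → ℂ) {p : ℝ≥0∞} (h0 : p ≠ 0) (ht : p ≠ ∞) :
    eLpNorm u p Measure.count
      = (∑' x, (‖u x‖₊ : ℝ≥0∞) ^ p.toReal) ^ (1 / p.toReal) := by
  rw [eLpNorm_eq_eLpNorm' h0 ht, eLpNorm', lintegral_count]
  rfl

private lemma elp_translate {n : ℕ} (u : (Fin n → ℤ) → ℂ) (h : Fin n → ℤ) {p : ℝ≥0∞}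
    (h0 : p ≠ 0) (ht : p ≠ ∞) :
    eLpNorm (fun x => u (x + h)) p Measure.count = eLpNorm u p Measure.count := by
  rw [elp_count _ h0 ht, elp_count u h0 ht,
    tsum_translate (fun x => (‖u x‖₊ : ℝ≥0∞) ^ p.toReal) h]

private lemma elp_disjoint {n : ℕ} (g : (Fin n → ℤ) → ℂ) (h : Fin n → ℤ)
    (hd : ∀ x, g x = 0 ∨ g (x + h) = 0) {p : ℝ≥0∞} (h0 : p ≠ 0) (ht : p ≠ ∞) :
    eLpNorm (fun x => g x + g (x + h)) p Measure.count
      = (2 : ℝ≥0∞) ^ (1 / p.toReal) * eLpNorm g p Measure.count := by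
  have hq : 0 < p.toReal := ENNReal.toReal_pos h0 ht
  rw [elp_count _ h0 ht, elp_count g h0 ht]
  have key : ∀ x, (‖g x + g (x + h)‖₊ : ℝ≥0∞) ^ p.toReal
      = (‖g x‖₊ : ℝ≥0∞) ^ p.toReal + (‖g (x + h)‖₊ : ℝ≥0∞) ^ p.toReal := by
    intro x
    rcases hd x with h1 | h1 <;>
      simp [h1, ENNReal.zero_rpow_of_pos hq]
  simp_rw [key]
  rw [ENNReal.tsum_add, tsum_translate (fun x => (‖g x‖₊ : ℝ≥0∞) ^ p.toReal) h,
    ← two_mul, ENNReal.mul_rpow_of_nonneg _ _ (by positivity)]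

/-- For f ∈ ℓ^p(ℤⁿ), 1 ≤ p < ∞, and f_h(x) = f(x) + f(x+h), one has
‖f_h‖_{ℓ^p} → 2^{1/p} ‖f‖_{ℓ^p} as ‖h‖ → ∞ (i.e. along the cofinite filter on ℤⁿ). -/
theorem translate_sum_lp_limit (n : ℕ) (p : ℝ≥0∞) (hp1 : 1 ≤ p) (hp2 : p ≠ ∞)
    (f : (Fin n → ℤ) → ℂ) (hf : MemLp f p Measure.count) :
    Tendsto (fun h : Fin n → ℤ =>
        eLpNorm (fun x => f x + f (x + h)) p Measure.count)
      cofinite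
      (nhds ((2 : ℝ≥0∞) ^ (1 / p.toReal) * eLpNorm f p Measure.count)) := by
  have h0 : p ≠ 0 := (zero_lt_one.trans_le hp1).ne'
  have hq : 0 < p.toReal := ENNReal.toReal_pos h0 hp2
  have meas : ∀ u : (Fin n → ℤ) → ℂ, AEStronglyMeasurable u Measure.count :=
    fun u => (measurable_of_countable u).aestronglyMeasurable
  set c : ℝ≥0∞ := (2 : ℝ≥0∞) ^ (1 / p.toReal) with hc
  have hc2 : c ≤ 2 := by
    calc c ≤ (2 : ℝ≥0∞) ^ (1 : ℝ) :=
          ENNReal.rpow_le_rpow_of_exponent_le (by norm_num)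
            (by
              rw [div_le_one hq, ← ENNReal.toReal_one]
              exact ENNReal.toReal_mono hp2 hp1)
      _ = 2 := ENNReal.rpow_one 2
  have hcfin : c ≠ ∞ := ENNReal.rpow_ne_top_of_nonneg (by positivity) (by norm_num)
  have hfin : eLpNorm f p Measure.count ≠ ∞ := hf.2.ne
  rw [ENNReal.tendsto_nhds (ENNReal.mul_ne_top hcfin hfin)]
  intro ε hε
  set δ := min (ε / 4) 1 with hδdef
  have hδ0 : 0 < δ := lt_min (ENNReal.div_pos hε.ne' (by norm_num)) zero_lt_one
  have hδt : δ ≠ ∞ := ne_top_of_le_ne_top one_ne_top (min_le_right _ _)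
  have h4δ : 4 * δ ≤ ε := by
    calc 4 * δ ≤ 4 * (ε / 4) := by gcongr; exact min_le_left _ _
      _ = ε := ENNReal.mul_div_cancel' (by norm_num) (by norm_num)
  -- tail sums of f are small: pick a finite set s
  have hS : (∑' x, (‖f x‖₊ : ℝ≥0∞) ^ p.toReal) ≠ ∞ := by
    intro hcon
    rw [elp_count f h0 hp2, hcon, ENNReal.top_rpow_of_pos (by positivity)] at hfin
    exact hfin rfl
  have hδq : (0 : ℝ≥0∞) < δ ^ p.toReal := ENNReal.rpow_pos hδ0 hδt
  obtain ⟨s, hs⟩ : ∃ s : Finset (Fin n → ℤ),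
      (∑' x : {x // x ∉ s}, (‖f (x : Fin n → ℤ)‖₊ : ℝ≥0∞) ^ p.toReal) < δ ^ p.toReal :=
    ((tendsto_order.1 (ENNReal.tendsto_tsum_compl_atTop_zero hS)).2 _ hδq).exists
  set g : (Fin n → ℤ) → ℂ := fun x => if x ∈ s then f x else 0 with hg
  set d : (Fin n → ℤ) → ℂ := fun x => f x - g x with hd
  have hdsmall : eLpNorm d p Measure.count < δ := by
    rw [elp_count d h0 hp2]
    have hsupp : Function.support (fun x => (‖d x‖₊ : ℝ≥0∞) ^ p.toReal)
        ⊆ {x | x ∉ s} := by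
      intro x hx
      simp only [Function.mem_support, ne_eq] at hx
      intro hxs
      exact hx (by simp [hd, hg, hxs, ENNReal.zero_rpow_of_pos hq])
    have this1 : (∑' x, (‖d x‖₊ : ℝ≥0∞) ^ p.toReal)
        = ∑' x : {x // x ∉ s}, (‖f (x : Fin n → ℤ)‖₊ : ℝ≥0∞) ^ p.toReal := by
      rw [← tsum_subtype_eq_of_support_subset hsupp]
      refine tsum_congr ?_
      rintro ⟨x, hx⟩
      simp only [Set.mem_setOf_eq] at hx
      simp [hd, hg, hx]
    rw [this1]
    calc (∑' x : {x // x ∉ s}, (‖f (x : Fin n → ℤ)‖₊ : ℝ≥0∞) ^ p.toReal) ^ (1 / p.toReal)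
        < (δ ^ p.toReal) ^ (1 / p.toReal) := by
          apply ENNReal.rpow_lt_rpow hs (by positivity)
      _ = δ := by
          rw [← ENNReal.rpow_mul, mul_one_div_cancel hq.ne', ENNReal.rpow_one]
  have hfg : f = fun x => g x + d x := by funext x; simp [hd]
  have hgf : g = fun x => f x - d x := by funext x; simp [hd]
  have hnormg : eLpNorm g p Measure.count ≤ eLpNorm f p Measure.count + δ := by
    calc eLpNorm g p Measure.count = eLpNorm (fun x => f x - d x) p Measure.count := by
          rw [← hgf]
      _ ≤ eLpNorm f p Measure.count + eLpNorm d p Measure.count :=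
          eLpNorm_sub_le (meas f) (meas d) hp1
      _ ≤ eLpNorm f p Measure.count + δ := add_le_add le_rfl hdsmall.le
  have hnormf : eLpNorm f p Measure.count ≤ eLpNorm g p Measure.count + δ := by
    calc eLpNorm f p Measure.count = eLpNorm (fun x => g x + d x) p Measure.count := by
          rw [← hfg]
      _ ≤ eLpNorm g p Measure.count + eLpNorm d p Measure.count :=
          eLpNorm_add_le (meas g) (meas d) hp1
      _ ≤ eLpNorm g p Measure.count + δ := add_le_add le_rfl hdsmall.le
  -- eventual disjointness
  have hev : ∀ᶠ h : Fin n → ℤ in cofinite, ∀ x, g x = 0 ∨ g (x + h) = 0 := by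
    have hfinB : (↑(Finset.image₂ (fun a b => a - b) s s) : Set (Fin n → ℤ)).Finite :=
      Finset.finite_toSet _
    filter_upwards [hfinB.compl_mem_cofinite] with h hh x
    by_contra hcon
    push_neg at hcon
    obtain ⟨h1, h2⟩ := hcon
    have hx : x ∈ s := by by_contra hx; exact h1 (by simp [hg, hx])
    have hxh : x + h ∈ s := by by_contra hx; exact h2 (by simp [hg, hx])
    exact hh (by
      simp only [Finset.coe_image₂, Set.mem_image2]
      exact ⟨x + h, hxh, x, hx, by abel⟩)
  filter_upwards [hev] with h hdis
  have hG : eLpNorm (fun x => g x + g (x + h)) p Measure.count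
      = c * eLpNorm g p Measure.count := elp_disjoint g h hdis h0 hp2
  have hDh : eLpNorm (fun x => d x + d (x + h)) p Measure.count ≤ 2 * δ := by
    calc eLpNorm (fun x => d x + d (x + h)) p Measure.count
        ≤ eLpNorm d p Measure.count + eLpNorm (fun x => d (x + h)) p Measure.count :=
          eLpNorm_add_le (meas d) (meas _) hp1
      _ = eLpNorm d p Measure.count + eLpNorm d p Measure.count := by
          rw [elp_translate d h h0 hp2]
      _ ≤ δ + δ := add_le_add hdsmall.le hdsmall.le
      _ = 2 * δ := (two_mul δ).symm
  have hFG : eLpNorm (fun x => f x + f (x + h)) p Measure.count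
      ≤ c * eLpNorm g p Measure.count + 2 * δ := by
    have heq : (fun x => f x + f (x + h))
        = fun x => (g x + g (x + h)) + (d x + d (x + h)) := by
      funext x
      simp only [hd]
      ring
    rw [heq, ← hG]
    calc eLpNorm (fun x => (g x + g (x + h)) + (d x + d (x + h))) p Measure.count
        ≤ eLpNorm (fun x => g x + g (x + h)) p Measure.count
            + eLpNorm (fun x => d x + d (x + h)) p Measure.count :=
          eLpNorm_add_le (meas _) (meas _) hp1
      _ ≤ _ + 2 * δ := by gcongr
  have hGF : c * eLpNorm g p Measure.count
      ≤ eLpNorm (fun x => f x + f (x + h)) p Measure.count + 2 * δ := by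
    have heq : (fun x => g x + g (x + h))
        = fun x => (f x + f (x + h)) - (d x + d (x + h)) := by
      funext x
      simp only [hd]
      ring
    rw [← hG, heq]
    calc eLpNorm (fun x => (f x + f (x + h)) - (d x + d (x + h))) p Measure.count
        ≤ eLpNorm (fun x => f x + f (x + h)) p Measure.count
            + eLpNorm (fun x => d x + d (x + h)) p Measure.count :=
          eLpNorm_sub_le (meas _) (meas _) hp1
      _ ≤ _ + 2 * δ := by gcongr
  have hcδ : c * δ ≤ 2 * δ := by gcongr
  constructor
  · -- lower bound
    rw [tsub_le_iff_right]
    calc c * eLpNorm f p Measure.count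
        ≤ c * (eLpNorm g p Measure.count + δ) := by gcongr
      _ = c * eLpNorm g p Measure.count + c * δ := mul_add _ _ _
      _ ≤ (eLpNorm (fun x => f x + f (x + h)) p Measure.count + 2 * δ) + 2 * δ := by
          gcongr
      _ = eLpNorm (fun x => f x + f (x + h)) p Measure.count + 4 * δ := by ring
      _ ≤ eLpNorm (fun x => f x + f (x + h)) p Measure.count + ε := by gcongr
  · -- upper bound
    calc eLpNorm (fun x => f x + f (x + h)) p Measure.count
        ≤ c * eLpNorm g p Measure.count + 2 * δ := hFG
      _ ≤ c * (eLpNorm f p Measure.count + δ) + 2 * δ := by gcongr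
      _ = c * eLpNorm f p Measure.count + c * δ + 2 * δ := by rw [mul_add]
      _ ≤ c * eLpNorm f p Measure.count + 2 * δ + 2 * δ := by gcongr
      _ = c * eLpNorm f p Measure.count + 4 * δ := by ring
      _ ≤ c * eLpNorm f p Measure.count + ε := by gcongr
end

section
/- Let n ≥ 2 and f = 𝟙_E be the indicator of the box E = {1,...,2N}^{n−1} × {1,...,nN²}. Then ‖f‖_{ℓ^p(ℤ^n)} ≃ N^{(n+1)/p} and ‖A_N^ℙ f‖_{ℓ^{p'}(ℤ^n)} ≳ N^{(n+1)/p'}; consequently ‖A_N^ℙ f‖_{ℓ^{p'}} / ‖f‖_{ℓ^p} ≳ N^{-(n+1)(2/p − 1)}. -/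
open MeasureTheory ENNReal

/-- Averaging operator along the discrete paraboloid in ℤⁿ with n = m+1. -/
noncomputable def parAvg (m N : ℕ) (f : (Fin (m + 1) → ℤ) → ℂ)
    (x : Fin (m + 1) → ℤ) : ℂ :=
  (1 / (N : ℂ) ^ m) * ∑ k ∈ Fintype.piFinset (fun _ : Fin m => Finset.Icc (1 : ℤ) (N : ℤ)),
    f (fun i => if h : i = Fin.last m then x i + ∑ j, (k j) ^ 2
                else x i + k (i.castPred h))

/-- Indicator of the box {1,...,2N}^{n−1} × {1,...,nN²} ⊂ ℤⁿ, n = m+1. -/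
noncomputable def boxInd (m N : ℕ) (x : Fin (m + 1) → ℤ) : ℂ :=
  if (∀ i : Fin m, 1 ≤ x i.castSucc ∧ x i.castSucc ≤ 2 * (N : ℤ)) ∧
      1 ≤ x (Fin.last m) ∧ x (Fin.last m) ≤ ((m + 1) : ℤ) * (N : ℤ) ^ 2
  then 1 else 0

noncomputable def boxSet (m N : ℕ) : Finset (Fin (m + 1) → ℤ) :=
  Fintype.piFinset (fun i => if i = Fin.last m then Finset.Icc (1 : ℤ) (((m + 1) : ℤ) * (N : ℤ) ^ 2)
    else Finset.Icc (1 : ℤ) (2 * (N : ℤ)))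

noncomputable def smallSet (m N : ℕ) : Finset (Fin (m + 1) → ℤ) :=
  Fintype.piFinset (fun i => if i = Fin.last m then Finset.Icc (1 : ℤ) ((N : ℤ) ^ 2)
    else Finset.Icc (1 : ℤ) (N : ℤ))

lemma mem_boxSet_iff (m N : ℕ) (x : Fin (m + 1) → ℤ) :
    x ∈ boxSet m N ↔ ((∀ i : Fin m, 1 ≤ x i.castSucc ∧ x i.castSucc ≤ 2 * (N : ℤ)) ∧
      1 ≤ x (Fin.last m) ∧ x (Fin.last m) ≤ ((m + 1) : ℤ) * (N : ℤ) ^ 2) := by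
  simp only [boxSet, Fintype.mem_piFinset]
  constructor
  · intro h
    refine ⟨fun i => ?_, ?_⟩
    · have hi := h i.castSucc
      rw [if_neg (Fin.castSucc_lt_last i).ne] at hi
      simpa using hi
    · have hl := h (Fin.last m)
      rw [if_pos rfl] at hl
      simpa using hl
  · rintro ⟨h1, h2⟩ i
    refine Fin.lastCases ?_ ?_ i
    · rw [if_pos rfl]; simpa using h2
    · intro j; rw [if_neg (Fin.castSucc_lt_last j).ne]; simpa using h1 j

lemma boxInd_eq_one (m N : ℕ) (x : Fin (m + 1) → ℤ) (hx : x ∈ boxSet m N) :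
    boxInd m N x = 1 := by
  rw [boxInd, if_pos ((mem_boxSet_iff m N x).mp hx)]

lemma boxInd_eq_zero (m N : ℕ) (x : Fin (m + 1) → ℤ) (hx : x ∉ boxSet m N) :
    boxInd m N x = 0 := by
  rw [boxInd, if_neg (fun h => hx ((mem_boxSet_iff m N x).mpr h))]

lemma boxSet_card (m N : ℕ) : (boxSet m N).card = (2 ^ m * (m + 1)) * N ^ (m + 2) := by
  rw [boxSet, Fintype.card_piFinset, Fin.prod_univ_castSucc]
  have h1 : ∀ i : Fin m, ((if (i.castSucc : Fin (m+1)) = Fin.last m then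
      Finset.Icc (1 : ℤ) (((m + 1) : ℤ) * (N : ℤ) ^ 2) else Finset.Icc (1 : ℤ) (2 * (N : ℤ))).card)
      = 2 * N := by
    intro i
    rw [if_neg (Fin.castSucc_lt_last i).ne, Int.card_Icc]
    omega
  rw [Finset.prod_congr rfl (fun i _ => h1 i), if_pos rfl, Int.card_Icc, Finset.prod_const,
    Finset.card_univ, Fintype.card_fin]
  have : (((m + 1) : ℤ) * (N : ℤ) ^ 2 + 1 - 1).toNat = (m + 1) * N ^ 2 := by
    have h2 : ((m + 1) : ℤ) * (N : ℤ) ^ 2 + 1 - 1 = (((m + 1) * N ^ 2 : ℕ) : ℤ) := by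
      push_cast; ring
    rw [h2, Int.toNat_natCast]
  rw [this]; ring

lemma smallSet_card (m N : ℕ) : (smallSet m N).card = N ^ (m + 2) := by
  rw [smallSet, Fintype.card_piFinset, Fin.prod_univ_castSucc]
  have h1 : ∀ i : Fin m, ((if (i.castSucc : Fin (m+1)) = Fin.last m then
      Finset.Icc (1 : ℤ) ((N : ℤ) ^ 2) else Finset.Icc (1 : ℤ) (N : ℤ)).card) = N := by
    intro i
    rw [if_neg (Fin.castSucc_lt_last i).ne, Int.card_Icc]
    omega
  rw [Finset.prod_congr rfl (fun i _ => h1 i), if_pos rfl, Int.card_Icc, Finset.prod_const,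
    Finset.card_univ, Fintype.card_fin]
  have : (((N : ℤ)) ^ 2 + 1 - 1).toNat = N ^ 2 := by
    have h2 : ((N : ℤ)) ^ 2 + 1 - 1 = ((N ^ 2 : ℕ) : ℤ) := by push_cast; ring
    rw [h2, Int.toNat_natCast]
  rw [this]; ring

lemma parAvg_eq_one (m N : ℕ) (hN : 1 ≤ N) (x : Fin (m + 1) → ℤ)
    (hx : x ∈ smallSet m N) : parAvg m N (boxInd m N) x = 1 := by
  have hmem := Fintype.mem_piFinset.mp hx
  have hterm : ∀ k ∈ Fintype.piFinset (fun _ : Fin m => Finset.Icc (1 : ℤ) (N : ℤ)),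
      boxInd m N (fun i => if h : i = Fin.last m then x i + ∑ j, (k j) ^ 2
        else x i + k (i.castPred h)) = 1 := by
    intro k hk
    have hkmem := Fintype.mem_piFinset.mp hk
    refine boxInd_eq_one m N _ ((mem_boxSet_iff m N _).mpr ⟨fun i => ?_, ?_⟩)
    · have hi : (i.castSucc : Fin (m+1)) ≠ Fin.last m := (Fin.castSucc_lt_last i).ne
      rw [dif_neg hi]
      have hxi := hmem i.castSucc
      rw [if_neg hi, Finset.mem_Icc] at hxi
      have hki := hkmem (i.castSucc.castPred hi)
      rw [Finset.mem_Icc] at hki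
      omega
    · rw [dif_pos rfl]
      have hxl := hmem (Fin.last m)
      rw [if_pos rfl, Finset.mem_Icc] at hxl
      have hsum_lb : (0 : ℤ) ≤ ∑ j, (k j) ^ 2 :=
        Finset.sum_nonneg (fun j _ => sq_nonneg _)
      have hsum_ub : ∑ j, (k j) ^ 2 ≤ (m : ℤ) * (N : ℤ) ^ 2 := by
        calc ∑ j, (k j) ^ 2 ≤ ∑ _j : Fin m, (N : ℤ) ^ 2 := by
              refine Finset.sum_le_sum (fun j _ => ?_)
              have := hkmem j
              rw [Finset.mem_Icc] at this
              nlinarith [this.1, this.2]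
          _ = (m : ℤ) * (N : ℤ) ^ 2 := by simp [mul_comm]
      constructor
      · linarith [hxl.1]
      ·
        nlinarith [hxl.2]
  rw [parAvg, Finset.sum_congr rfl hterm, Finset.sum_const, Fintype.card_piFinset]
  have hcard : ∏ _i : Fin m, (Finset.Icc (1 : ℤ) (N : ℤ)).card = N ^ m := by
    rw [Finset.prod_const, Finset.card_univ, Fintype.card_fin, Int.card_Icc]
    congr 1; omega
  rw [hcard]
  have hNne : (N : ℂ) ^ m ≠ 0 := pow_ne_zero _ (Nat.cast_ne_zero.mpr (by omega))
  field_simp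
  simp

lemma tsum_norm_rpow {α : Type*} (s : Finset α) (p : ℝ) (hp : 0 < p)
    (f : α → ℂ) (h1 : ∀ x ∈ s, f x = 1) (h0 : ∀ x ∉ s, f x = 0) :
    ∑' x, (‖f x‖₊ : ℝ≥0∞) ^ p = (s.card : ℝ≥0∞) := by
  classical
  have key : ∀ x, (‖f x‖₊ : ℝ≥0∞) ^ p = if x ∈ s then 1 else 0 := by
    intro x
    by_cases hx : x ∈ s
    · simp [hx, h1 x hx]
    · simp [hx, h0 x hx, ENNReal.zero_rpow_of_pos hp]
  simp_rw [key]
  rw [tsum_eq_sum (s := s) (by intro b hb; simp [hb])]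
  simp

lemma eLpNorm_count_of_indicator {α : Type*} [MeasurableSpace α] [MeasurableSingletonClass α]
    (s : Finset α) (p : ℝ) (hp : 0 < p)
    (f : α → ℂ) (h1 : ∀ x ∈ s, f x = 1) (h0 : ∀ x ∉ s, f x = 0) :
    eLpNorm f (ENNReal.ofReal p) Measure.count = (s.card : ℝ≥0∞) ^ (1 / p) := by
  rw [eLpNorm_eq_lintegral_rpow_enorm_toReal (by simp [hp]) (by simp),
    ENNReal.toReal_ofReal hp.le, lintegral_count]
  simp only [enorm_eq_nnnorm]
  rw [tsum_norm_rpow s p hp f h1 h0]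

lemma le_eLpNorm_count {α : Type*} [MeasurableSpace α] [MeasurableSingletonClass α]
    (s : Finset α) (p : ℝ) (hp : 0 < p)
    (f : α → ℂ) (h1 : ∀ x ∈ s, f x = 1) :
    (s.card : ℝ≥0∞) ^ (1 / p) ≤ eLpNorm f (ENNReal.ofReal p) Measure.count := by
  rw [eLpNorm_eq_lintegral_rpow_enorm_toReal (by simp [hp]) (by simp),
    ENNReal.toReal_ofReal hp.le, lintegral_count]
  refine ENNReal.rpow_le_rpow ?_ (by positivity)
  calc (s.card : ℝ≥0∞) = ∑ x ∈ s, (1 : ℝ≥0∞) := by simp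
    _ = ∑ x ∈ s, (‖f x‖₊ : ℝ≥0∞) ^ p :=
        Finset.sum_congr rfl (fun x hx => by simp [h1 x hx])
    _ ≤ ∑' x, (‖f x‖₊ : ℝ≥0∞) ^ p := ENNReal.sum_le_tsum s

lemma pow_card_rpow (N a : ℕ) (r : ℝ) :
    ((N ^ a : ℕ) : ℝ≥0∞) ^ r = (N : ℝ≥0∞) ^ ((a : ℝ) * r) := by
  push_cast
  rw [← ENNReal.rpow_natCast (N : ℝ≥0∞) a, ← ENNReal.rpow_mul]

/-- Sharpness example: with f = 𝟙_{{1,…,2N}^{n−1} × {1,…,nN²}} one has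
‖f‖_{ℓ^p} ≃ N^{(n+1)/p}, ‖A_N^ℙ f‖_{ℓ^{p'}} ≳ N^{(n+1)/p'}, and hence
‖A_N^ℙ f‖_{ℓ^{p'}} ≳ N^{−(n+1)(2/p−1)} ‖f‖_{ℓ^p}, where n = m+1, p' = p/(p−1). -/
theorem parAvg_sharpness_box (m : ℕ) (hm : 1 ≤ m) (p : ℝ) (hp : 1 < p) :
    ∃ c C c' c'' : ℝ≥0∞, 0 < c ∧ C < ∞ ∧ 0 < c' ∧ 0 < c'' ∧
      ∀ N : ℕ, 1 ≤ N →
        (c * (N : ℝ≥0∞) ^ (((m : ℝ) + 2) / p)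
            ≤ eLpNorm (boxInd m N) (ENNReal.ofReal p) Measure.count ∧
          eLpNorm (boxInd m N) (ENNReal.ofReal p) Measure.count
            ≤ C * (N : ℝ≥0∞) ^ (((m : ℝ) + 2) / p)) ∧
        c' * (N : ℝ≥0∞) ^ (((m : ℝ) + 2) / (p / (p - 1)))
            ≤ eLpNorm (parAvg m N (boxInd m N)) (ENNReal.ofReal (p / (p - 1)))
                Measure.count ∧
        c'' * (N : ℝ≥0∞) ^ (-((m : ℝ) + 2) * (2 / p - 1))
              * eLpNorm (boxInd m N) (ENNReal.ofReal p) Measure.count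
            ≤ eLpNorm (parAvg m N (boxInd m N)) (ENNReal.ofReal (p / (p - 1)))
                Measure.count := by
  have hp0 : 0 < p := lt_trans one_pos hp
  have hp1 : (0:ℝ) < p - 1 := by linarith
  have hp'0 : 0 < p / (p - 1) := div_pos hp0 hp1
  set C : ℝ≥0∞ := ((2 ^ m * (m + 1) : ℕ) : ℝ≥0∞) ^ (1 / p) with hC
  have hbase0 : ((2 ^ m * (m + 1) : ℕ) : ℝ≥0∞) ≠ 0 := Nat.cast_ne_zero.mpr (by positivity)
  have hbtop : ((2 ^ m * (m + 1) : ℕ) : ℝ≥0∞) ≠ ⊤ := ENNReal.natCast_ne_top _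
  have hCpos : 0 < C := ENNReal.rpow_pos hbase0.bot_lt hbtop
  have hCtop : C < ⊤ := ENNReal.rpow_lt_top_of_nonneg (by positivity) hbtop
  refine ⟨C, C, 1, C⁻¹, hCpos, hCtop, one_pos, ENNReal.inv_pos.mpr hCtop.ne, ?_⟩
  intro N hN
  have hN0 : ((N : ℕ) : ℝ≥0∞) ≠ 0 := Nat.cast_ne_zero.mpr (by omega)
  have hbox : eLpNorm (boxInd m N) (ENNReal.ofReal p) Measure.count
      = C * (N : ℝ≥0∞) ^ (((m : ℝ) + 2) / p) := by
    rw [eLpNorm_count_of_indicator (boxSet m N) p hp0 _ (boxInd_eq_one m N)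
      (boxInd_eq_zero m N), boxSet_card, Nat.cast_mul,
      ENNReal.mul_rpow_of_nonneg _ _ (by positivity), pow_card_rpow]
    congr 1
    push_cast
    ring
  have hsmall : (N : ℝ≥0∞) ^ (((m : ℝ) + 2) / (p / (p - 1)))
      ≤ eLpNorm (parAvg m N (boxInd m N)) (ENNReal.ofReal (p / (p - 1))) Measure.count := by
    have := le_eLpNorm_count (smallSet m N) (p / (p - 1)) hp'0
      (parAvg m N (boxInd m N)) (parAvg_eq_one m N hN)
    rw [smallSet_card, pow_card_rpow] at this
    convert this using 2
    push_cast
    ring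
  refine ⟨⟨le_of_eq hbox.symm, le_of_eq hbox⟩, ?_, ?_⟩
  · rw [one_mul]; exact hsmall
  · rw [hbox]
    have hexp : -((m : ℝ) + 2) * (2 / p - 1) + ((m : ℝ) + 2) / p
        = ((m : ℝ) + 2) / (p / (p - 1)) := by
      field_simp
      ring
    calc C⁻¹ * (N : ℝ≥0∞) ^ (-((m : ℝ) + 2) * (2 / p - 1))
          * (C * (N : ℝ≥0∞) ^ (((m : ℝ) + 2) / p))
        = (C⁻¹ * C) * ((N : ℝ≥0∞) ^ (-((m : ℝ) + 2) * (2 / p - 1))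
            * (N : ℝ≥0∞) ^ (((m : ℝ) + 2) / p)) := by ring
      _ = (N : ℝ≥0∞) ^ (((m : ℝ) + 2) / (p / (p - 1))) := by
          rw [ENNReal.inv_mul_cancel hCpos.ne' hCtop.ne,
            ← ENNReal.rpow_add _ _ hN0 (ENNReal.natCast_ne_top N), hexp, one_mul]
      _ ≤ _ := hsmall
end

section
/- Let n ≥ 2 and f = δ_0 (the Dirac delta at the origin of ℤ^n). Then ‖A_N^ℙ f‖_{ℓ^{p'}(ℤ^n)} ≥ N^{-(n−1)/p}, and hence the estimate ‖A_N^ℙ f‖_{ℓ^{p'}(ℤ^n)} ≲ N^{-(n+1)(2/p−1)} ‖f‖_{ℓ^p(ℤ^n)} (uniformly in N) forces p ≥ (n+3)/(n+1). -/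
open MeasureTheory ENNReal NNReal

noncomputable def dirac0 (m : ℕ) (x : Fin (m + 1) → ℤ) : ℂ :=
  if x = 0 then 1 else 0

def pt (m : ℕ) (k : Fin m → ℤ) : Fin (m + 1) → ℤ :=
  fun i => if h : i = Fin.last m then -(∑ j, (k j) ^ 2) else -(k (i.castPred h))

lemma pt_injective (m : ℕ) : Function.Injective (pt m) := by
  intro a b hab
  funext j
  have h := congrFun hab j.castSucc
  simp only [pt, dif_neg (Fin.castSucc_lt_last j).ne, Fin.castPred_castSucc] at h
  omega

lemma parAvg_pt (m N : ℕ) (k : Fin m → ℤ)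
    (hk : k ∈ Fintype.piFinset (fun _ : Fin m => Finset.Icc (1 : ℤ) (N : ℤ))) :
    parAvg m N (dirac0 m) (pt m k) = 1 / (N : ℂ) ^ m := by
  unfold parAvg
  have key : ∀ k' : Fin m → ℤ,
      dirac0 m (fun i => if h : i = Fin.last m then pt m k i + ∑ j, (k' j) ^ 2
        else pt m k i + k' (i.castPred h)) = if k' = k then 1 else 0 := by
    intro k'
    have hiff : ((fun i => if h : i = Fin.last m then pt m k i + ∑ j, (k' j) ^ 2
        else pt m k i + k' (i.castPred h)) = (0 : Fin (m + 1) → ℤ)) ↔ k' = k := by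
      constructor
      · intro h0
        funext j
        have h := congrFun h0 j.castSucc
        simp only [dif_neg (Fin.castSucc_lt_last j).ne, pt, Fin.castPred_castSucc,
          Pi.zero_apply] at h
        omega
      · rintro rfl
        funext i
        by_cases h : i = Fin.last m
        · subst h; simp [pt]
        · simp [pt, h]
    simp only [dirac0]
    rw [if_congr hiff rfl rfl]
  rw [Finset.sum_congr rfl fun k' _ => key k', Finset.sum_ite_eq' _ k (fun _ => (1 : ℂ)),
    if_pos hk, mul_one]

/-- With f = δ₀ one has ‖A_N^ℙ δ₀‖_{ℓ^{p'}} ≥ N^{−(n−1)/p}, and the uniform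
estimate ‖A_N^ℙ δ₀‖_{ℓ^{p'}} ≤ C N^{−(n+1)(2/p−1)} ‖δ₀‖_{ℓ^p} forces
p ≥ (n+3)/(n+1).  Here n = m+1 and p' = p/(p−1). -/
theorem parAvg_delta_necessity (m : ℕ) (hm : 1 ≤ m) (p : ℝ) (hp : 1 < p) :
    (∀ N : ℕ, 1 ≤ N →
      (N : ℝ≥0∞) ^ (-(m : ℝ) / p)
        ≤ eLpNorm (parAvg m N (dirac0 m)) (ENNReal.ofReal (p / (p - 1)))
            Measure.count) ∧
    ((∃ C : ℝ≥0, ∀ N : ℕ, 1 ≤ N →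
        eLpNorm (parAvg m N (dirac0 m)) (ENNReal.ofReal (p / (p - 1))) Measure.count
          ≤ C * (N : ℝ≥0∞) ^ (-((m : ℝ) + 2) * (2 / p - 1))
              * eLpNorm (dirac0 m) (ENNReal.ofReal p) Measure.count) →
      ((m : ℝ) + 4) / ((m : ℝ) + 2) ≤ p) := by
  have hp0 : (0 : ℝ) < p := lt_trans one_pos hp
  have hp1 : (0 : ℝ) < p - 1 := by linarith
  set r : ℝ := p / (p - 1) with hrdef
  have hr1 : 1 < r := (one_lt_div hp1).2 (by linarith)
  have hr0 : 0 < r := lt_trans one_pos hr1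
  have hq0 : ENNReal.ofReal r ≠ 0 := (ENNReal.ofReal_pos.2 hr0).ne'
  have lower : ∀ N : ℕ, 1 ≤ N → (N : ℝ≥0∞) ^ (-(m : ℝ) / p)
      ≤ eLpNorm (parAvg m N (dirac0 m)) (ENNReal.ofReal r) Measure.count := by
    intro N hN
    have hNne : (N : ℝ≥0∞) ≠ 0 := by
      simp only [ne_eq, Nat.cast_eq_zero]; omega
    have hNtop : (N : ℝ≥0∞) ≠ ⊤ := natCast_ne_top N
    rw [eLpNorm_eq_lintegral_rpow_enorm_toReal hq0 ofReal_ne_top, lintegral_count,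
      ENNReal.toReal_ofReal hr0.le]
    simp only [enorm_eq_nnnorm]
    set K := Fintype.piFinset (fun _ : Fin m => Finset.Icc (1 : ℤ) (N : ℤ)) with hK
    have hcard : K.card = N ^ m := by
      simp [hK, Fintype.card_piFinset, Int.card_Icc]
    have hsum : ∑ x ∈ K.image (pt m), (↑‖parAvg m N (dirac0 m) x‖₊ : ℝ≥0∞) ^ r
        = (N : ℝ≥0∞) ^ (m : ℝ) * (N : ℝ≥0∞) ^ (-((m : ℝ) * r)) := by
      rw [Finset.sum_image (fun a _ b _ h => pt_injective m h)]
      have hval : ∀ kk ∈ K, (↑‖parAvg m N (dirac0 m) (pt m kk)‖₊ : ℝ≥0∞) ^ r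
          = (N : ℝ≥0∞) ^ (-((m : ℝ) * r)) := by
        intro kk hkk
        rw [parAvg_pt m N kk hkk]
        have hnn : (↑‖(1 / (N : ℂ) ^ m)‖₊ : ℝ≥0∞) = ((N : ℝ≥0∞) ^ m)⁻¹ := by
          have hNn0 : (N : ℝ≥0) ≠ 0 := Nat.cast_ne_zero.2 (by omega)
          simp [one_div, nnnorm_inv, nnnorm_pow,
            ENNReal.coe_inv (pow_ne_zero m hNn0), ENNReal.coe_pow]
        rw [hnn, ENNReal.inv_rpow, ← ENNReal.rpow_natCast, ← ENNReal.rpow_mul,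
          ← ENNReal.rpow_neg]
      rw [Finset.sum_congr rfl hval, Finset.sum_const, hcard, nsmul_eq_mul]
      congr 1
      rw [Nat.cast_pow, ← ENNReal.rpow_natCast]
    have hle : (N : ℝ≥0∞) ^ (m : ℝ) * (N : ℝ≥0∞) ^ (-((m : ℝ) * r))
        ≤ ∑' x, (↑‖parAvg m N (dirac0 m) x‖₊ : ℝ≥0∞) ^ r := by
      rw [← hsum]; exact ENNReal.sum_le_tsum _
    calc (N : ℝ≥0∞) ^ (-(m : ℝ) / p)
        = ((N : ℝ≥0∞) ^ ((m : ℝ) + -((m : ℝ) * r))) ^ (1 / r) := by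
          rw [← ENNReal.rpow_mul]
          congr 1
          rw [hrdef]
          field_simp
          ring
      _ = ((N : ℝ≥0∞) ^ (m : ℝ) * (N : ℝ≥0∞) ^ (-((m : ℝ) * r))) ^ (1 / r) := by
          rw [ENNReal.rpow_add _ _ hNne hNtop]
      _ ≤ _ := ENNReal.rpow_le_rpow hle (by positivity)
  refine ⟨lower, ?_⟩
  rintro ⟨C, hC⟩
  by_contra hcon
  push_neg at hcon
  have hdirac : eLpNorm (dirac0 m) (ENNReal.ofReal p) Measure.count = 1 := by
    rw [eLpNorm_eq_lintegral_rpow_enorm_toReal (ENNReal.ofReal_pos.2 hp0).ne' ofReal_ne_top,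
      lintegral_count, ENNReal.toReal_ofReal hp0.le]
    simp only [enorm_eq_nnnorm]
    have hpt : ∀ x : Fin (m + 1) → ℤ,
        (↑‖dirac0 m x‖₊ : ℝ≥0∞) ^ p = if x = 0 then 1 else 0 := by
      intro x
      by_cases hx : x = 0 <;> simp [dirac0, hx, ENNReal.zero_rpow_of_pos hp0]
    rw [tsum_congr hpt, tsum_eq_single 0 (by intro b hb; simp [hb]), if_pos rfl,
      ENNReal.one_rpow]
  set ε : ℝ := -(m : ℝ) / p + ((m : ℝ) + 2) * (2 / p - 1) with hε
  have hnum : ((m : ℝ) + 2) * p < (m : ℝ) + 4 := by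
    have h2 : (0 : ℝ) < (m : ℝ) + 2 := by positivity
    calc ((m : ℝ) + 2) * p < ((m : ℝ) + 2) * (((m : ℝ) + 4) / ((m : ℝ) + 2)) :=
          mul_lt_mul_of_pos_left hcon h2
      _ = (m : ℝ) + 4 := by field_simp
  have hε0 : 0 < ε := by
    have heq : ε = ((m : ℝ) + 4 - ((m : ℝ) + 2) * p) / p := by
      rw [hε]; field_simp; ring
    rw [heq]
    exact div_pos (by linarith) hp0
  have key : ∀ N : ℕ, 1 ≤ N → (N : ℝ≥0∞) ^ ε ≤ (C : ℝ≥0∞) := by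
    intro N hN
    have hNne : (N : ℝ≥0∞) ≠ 0 := by
      simp only [ne_eq, Nat.cast_eq_zero]; omega
    have h1 := (lower N hN).trans (hC N hN)
    rw [hdirac, mul_one] at h1
    have h2 : (N : ℝ≥0∞) ^ ε
        = (N : ℝ≥0∞) ^ (-(m : ℝ) / p) * (N : ℝ≥0∞) ^ (((m : ℝ) + 2) * (2 / p - 1)) := by
      rw [hε, ENNReal.rpow_add _ _ hNne (natCast_ne_top N)]
    rw [h2]
    calc (N : ℝ≥0∞) ^ (-(m : ℝ) / p) * (N : ℝ≥0∞) ^ (((m : ℝ) + 2) * (2 / p - 1))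
        ≤ (C : ℝ≥0∞) * (N : ℝ≥0∞) ^ (-((m : ℝ) + 2) * (2 / p - 1))
            * (N : ℝ≥0∞) ^ (((m : ℝ) + 2) * (2 / p - 1)) := mul_le_mul_left h1 _
      _ = (C : ℝ≥0∞) := by
          rw [mul_assoc, ← ENNReal.rpow_add _ _ hNne (natCast_ne_top N),
            show -((m : ℝ) + 2) * (2 / p - 1) + ((m : ℝ) + 2) * (2 / p - 1) = 0 by ring,
            ENNReal.rpow_zero, mul_one]
  obtain ⟨N, hNgt⟩ := exists_nat_gt (max 1 (((C : ℝ≥0) : ℝ) ^ (1 / ε)))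
  have hN1 : 1 ≤ N := by
    have : (1 : ℝ) < N := lt_of_le_of_lt (le_max_left _ _) hNgt
    exact_mod_cast this.le
  have hkey := key N hN1
  have h3 : (N : ℝ≥0∞) ≤ (C : ℝ≥0∞) ^ (1 / ε) := by
    have h := ENNReal.rpow_le_rpow hkey (by positivity : (0 : ℝ) ≤ 1 / ε)
    rwa [← ENNReal.rpow_mul, mul_one_div, div_self hε0.ne', ENNReal.rpow_one] at h
  have h4 : ((N : ℝ≥0) : ℝ≥0∞) ≤ ((C ^ (1 / ε) : ℝ≥0) : ℝ≥0∞) := by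
    rw [ENNReal.coe_rpow_of_nonneg _ (by positivity : (0 : ℝ) ≤ 1 / ε)] at *
    exact_mod_cast h3
  have h5 : (N : ℝ) ≤ ((C : ℝ≥0) : ℝ) ^ (1 / ε) := by
    have := ENNReal.coe_le_coe.mp h4
    exact_mod_cast NNReal.coe_le_coe.mpr this
  have h6 : ((C : ℝ≥0) : ℝ) ^ (1 / ε) < N := lt_of_le_of_lt (le_max_right _ _) hNgt
  linarith
end
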